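/- Any smooth word w over {a,b} has both a left smooth extension and a right smooth extension; that is, there exist letters α, β in {a,b} such that αw and wβ are smooth. -/

import Mathlib

/-- Run-length encoding Δ: the list of lengths of maximal runs. -/
def rle (w : List ℕ) : List ℕ := (w.splitBy (· == ·)).map List.length

/-- Trim the first entry if it is less than `b`. -/
def trimF (b : ℕ) : List ℕ → List ℕ
  | [] => []
  | x :: xs => if x < b then xs else x :: xs

/-- The derivative D: run lengths, dropping boundary runs shorter than `b`. -/
def derW (b : ℕ) (w : List ℕ) : List ℕ :=
  (trimF b ((trimF b (rle w)).reverse)).reverse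

/-- `w` is a word over the alphabet `{a, b}`. -/
def WordOver (a b : ℕ) (w : List ℕ) : Prop := ∀ c ∈ w, c = a ∨ c = b

/-- `w` is differentiable: all runs have length at most `b`, and all
interior runs have length exactly `a` or `b`. -/
def DiffW (a b : ℕ) (w : List ℕ) : Prop :=
  (∀ t ∈ rle w, t ≤ b) ∧ (∀ t ∈ ((rle w).drop 1).dropLast, t = a ∨ t = b)

/-- The closure ŵ: extend the first (resp. last) run to length `b`
if its length is strictly greater than `a`. -/
def clos (a b : ℕ) (w : List ℕ) : List ℕ :=
  (if a < (rle w).headD 0 then List.replicate (b - (rle w).headD 0) (w.headD 0) else [])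
    ++ w ++
  (if a < (rle w).getLastD 0 then List.replicate (b - (rle w).getLastD 0) (w.getLastD 0) else [])

/-- ρ(w) = D(ŵ). -/
def rhoW (a b : ℕ) (w : List ℕ) : List ℕ := derW b (clos a b w)

/-- `w` is a smooth (C^∞_{a,b}) word: it is a word over `{a,b}`, every iterated
closure is differentiable, and iterating ρ eventually yields the empty word. -/
def SmoothW (a b : ℕ) (w : List ℕ) : Prop :=
  WordOver a b w ∧ (∀ k : ℕ, DiffW a b (clos a b ((rhoW a b)^[k] w))) ∧
    ∃ k : ℕ, (rhoW a b)^[k] w = []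

/-- n-th power of a word (n-fold concatenation). -/
def lpow (u : List ℕ) (n : ℕ) : List ℕ := (List.replicate n u).flatten

/-- The pseudo-inverse Δ_α^{-1}: maps u₁u₂u₃⋯ to α^{u₁} β^{u₂} α^{u₃} ⋯ . -/
def dinv (α β : ℕ) : List ℕ → List ℕ
  | [] => []
  | t :: ts => List.replicate t α ++ dinv β α ts

theorem splitByLoop_append {R : ℕ → ℕ → Bool} (l : List ℕ) (a : ℕ) (g : List ℕ)
    (gs : List (List ℕ)) :
    List.splitBy.loop R l a g gs = gs.reverse ++ List.splitBy.loop R l a g [] := by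
  induction l generalizing a g gs with
  | nil => simp [List.splitBy.loop]
  | cons x l ih =>
    simp only [List.splitBy.loop]
    cases hR : R a x with
    | true => simp only; exact ih x (a :: g) gs
    | false =>
      simp only
      rw [ih x [] ((a :: g).reverse :: gs), ih x [] [(a :: g).reverse]]
      simp

theorem splitByLoop_g {R : ℕ → ℕ → Bool} (l : List ℕ) (a : ℕ) :
    ∃ h t, List.splitBy.loop R l a [] [] = h :: t ∧
      ∀ g : List ℕ, List.splitBy.loop R l a g [] = (g.reverse ++ h) :: t := by
  induction l generalizing a with
  | nil => exact ⟨[a], [], by simp [List.splitBy.loop], fun g => by simp [List.splitBy.loop]⟩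
  | cons x l ih =>
    cases hR : R a x with
    | true =>
      obtain ⟨h, t, h1, h2⟩ := ih x
      refine ⟨a :: h, t, ?_, fun g => ?_⟩ <;>
        · simp only [List.splitBy.loop, hR]
          rw [h2]
          simp
    | false =>
      refine ⟨[a], List.splitBy.loop R l x [] [], ?_, fun g => ?_⟩ <;>
        · simp only [List.splitBy.loop, hR]
          rw [splitByLoop_append]
          simp

theorem rle_nil : rle [] = [] := rfl

theorem rle_cons_eq (c : ℕ) (w : List ℕ) (h : w.head? = some c) :
    rle (c :: w) = ((rle w).headD 0 + 1) :: (rle w).tail := by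
  cases w with
  | nil => simp at h
  | cons x l =>
    simp only [List.head?_cons, Option.some.injEq] at h
    have hcx : (c == x) = true := by simp [h]
    obtain ⟨h', t, h1, h2⟩ := splitByLoop_g (R := fun x1 x2 => x1 == x2) l x
    have e1 : (c :: x :: l).splitBy (· == ·) = (c :: h') :: t := by
      show List.splitBy.loop _ (x :: l) c [] [] = _
      simp only [List.splitBy.loop, hcx]
      rw [h2]; simp
    have e2 : (x :: l).splitBy (· == ·) = h' :: t := h1
    simp [rle, e1, e2, Nat.add_comm]

theorem rle_cons_ne (c : ℕ) (w : List ℕ) (h : w.head? ≠ some c) :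
    rle (c :: w) = 1 :: rle w := by
  cases w with
  | nil => rfl
  | cons x l =>
    simp only [List.head?_cons, ne_eq, Option.some.injEq] at h
    have hcx : (c == x) = false := by simp; exact fun e => h e.symm
    have : (c :: x :: l).splitBy (· == ·) = [c] :: (x :: l).splitBy (· == ·) := by
      show List.splitBy.loop _ (x :: l) c [] [] = _
      simp only [List.splitBy.loop, hcx]
      rw [splitByLoop_append]
      rfl
    simp [rle, this]

theorem rle_eq_nil {w : List ℕ} : rle w = [] ↔ w = [] := by
  constructor
  · intro h
    have := List.flatten_splitBy (· == ·) w
    rcases e : w.splitBy (· == ·) with _ | ⟨g, gs⟩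
    · rw [e] at this; simpa using this.symm
    · rw [rle, e] at h; simp at h
  · rintro rfl; rfl

theorem rle_pos {w : List ℕ} {t : ℕ} (h : t ∈ rle w) : 0 < t := by
  rw [rle, List.mem_map] at h
  obtain ⟨g, hg, rfl⟩ := h
  have := List.ne_nil_of_mem_splitBy hg
  exact List.length_pos_iff.mpr this

theorem rle_ne_nil {w : List ℕ} (h : w ≠ []) : rle w ≠ [] := fun e => h (rle_eq_nil.mp e)

theorem rle_replicate_append (p c : ℕ) (w : List ℕ) (h : w.head? = some c) :
    rle (List.replicate p c ++ w) = (p + (rle w).headD 0) :: (rle w).tail := by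
  induction p with
  | zero =>
    have hw : w ≠ [] := by rintro rfl; simp at h
    rcases e : rle w with _ | ⟨x, xs⟩
    · exact absurd e (rle_ne_nil hw)
    · simp [e]
  | succ p ih =>
    have hh : (List.replicate p c ++ w).head? = some c := by
      cases p with
      | zero => simpa using h
      | succ p => simp [List.replicate_succ]
    rw [List.replicate_succ, List.cons_append, rle_cons_eq c _ hh, ih]
    simp [Nat.add_comm, Nat.add_assoc, Nat.add_left_comm]

theorem rle_replicate (n c : ℕ) (h : 0 < n) : rle (List.replicate n c) = [n] := by
  cases n with
  | zero => simp at h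
  | succ p =>
    rw [List.replicate_succ', rle_replicate_append p c [c] rfl]
    rfl

theorem rle_append_ne (x w : List ℕ) (hx : x ≠ []) (hne : x.getLast? ≠ w.head?) :
    rle (x ++ w) = rle x ++ rle w := by
  induction x with
  | nil => simp at hx
  | cons c l ih =>
    rcases eq_or_ne l [] with rfl | hl
    · simp only [List.getLast?_singleton] at hne
      rw [List.singleton_append, rle_cons_ne c w (fun e => hne e.symm),
        show rle [c] = [1] from rfl]
      rfl
    · have hlast : (c :: l).getLast? = l.getLast? := by
        cases l with | nil => exact absurd rfl hl | cons d m => simp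
      rw [List.cons_append]
      have happ := ih hl (hlast ▸ hne)
      rcases eq_or_ne (l.head?) (some c) with he | he
      · have h1 : (l ++ w).head? = some c := by
          rw [List.head?_append_of_ne_nil _ hl]; exact he
        rw [rle_cons_eq c _ h1, rle_cons_eq c _ he, happ]
        rcases e : rle l with _ | ⟨y, ys⟩
        · exact absurd e (rle_ne_nil hl)
        · simp [e]
      · have h1 : (l ++ w).head? ≠ some c := by
          rw [List.head?_append_of_ne_nil _ hl]; exact he
        rw [rle_cons_ne c _ h1, rle_cons_ne c _ he, happ]
        simp

theorem exists_run (w : List ℕ) (hw : w ≠ []) :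
    ∃ n c w', 0 < n ∧ w = List.replicate n c ++ w' ∧ w'.head? ≠ some c := by
  induction w with
  | nil => exact absurd rfl hw
  | cons c l ih =>
    rcases eq_or_ne l [] with rfl | hl
    · exact ⟨1, c, [], one_pos, by simp, by simp⟩
    · obtain ⟨n, d, w', hn, hdec, hne⟩ := ih hl
      rcases eq_or_ne c d with rfl | hcd
      · exact ⟨n + 1, c, w', Nat.succ_pos n, by rw [List.replicate_succ]; simp [hdec], hne⟩
      · refine ⟨1, c, l, one_pos, by simp, ?_⟩
        rw [hdec]
        cases n with
        | zero => simp at hn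
        | succ m => simp [List.replicate_succ, Ne.symm hcd]

theorem rle_reverse_aux : ∀ N w, List.length w ≤ N → rle (List.reverse w) = (rle w).reverse := by
  intro N
  induction N with
  | zero =>
    intro w hw
    rw [List.length_eq_zero_iff.mp (Nat.le_zero.mp hw)]
    rfl
  | succ N ih =>
    intro w hlen
    by_cases hw : w = []
    · subst hw; rfl
    · obtain ⟨n, c, w', hn, rfl, hne⟩ := exists_run w hw
      have h1 : rle (List.replicate n c ++ w') = n :: rle w' := by
        rcases eq_or_ne w' [] with rfl | hw'
        · rw [List.append_nil, rle_replicate n c hn]; rfl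
        · rw [rle_append_ne _ _ (by simp [Nat.pos_iff_ne_zero.mp hn]) ?_, rle_replicate n c hn]
          · rfl
          · rw [List.getLast?_replicate]
            simp only [Nat.pos_iff_ne_zero.mp hn, if_false]
            exact fun e => hne e.symm
      have h2 : (List.replicate n c ++ w').reverse = w'.reverse ++ List.replicate n c := by
        simp
      rcases eq_or_ne w' [] with rfl | hw'
      · simp [h1, h2, rle_replicate n c hn]
      · have hlen' : w'.length ≤ N := by
          simp only [List.length_append, List.length_replicate] at hlen
          omega
        have ihw := ih w' hlen'
        rw [h1, h2, rle_append_ne _ _ (by simpa using hw') ?_, ihw, rle_replicate n c hn]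
        · simp
        · rw [List.getLast?_reverse]
          cases n with
          | zero => simp at hn
          | succ m => simp [List.replicate_succ, hne]

theorem rle_reverse (w : List ℕ) : rle w.reverse = (rle w).reverse :=
  rle_reverse_aux w.length w le_rfl

section Derived

end Derived


theorem trimF_cons (b x : ℕ) (xs : List ℕ) : trimF b (x :: xs) = if x < b then xs else x :: xs :=
  rfl

theorem list_shape (l : List ℕ) :
    l = [] ∨ (∃ x, l = [x]) ∨ ∃ x mm y, l = x :: (mm ++ [y]) := by
  cases l with
  | nil => exact Or.inl rfl
  | cons x l' =>
    rcases List.eq_nil_or_concat l' with rfl | ⟨mm, y, rfl⟩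
    · exact Or.inr (Or.inl ⟨x, rfl⟩)
    · exact Or.inr (Or.inr ⟨x, mm, y, by simp⟩)

theorem derW_of_rle_nil {b : ℕ} {w : List ℕ} (h : rle w = []) : derW b w = [] := by
  rw [derW, h]; rfl

theorem derW_of_rle_single {b x : ℕ} {w : List ℕ} (h : rle w = [x]) :
    derW b w = if x < b then [] else [x] := by
  rw [derW, h]
  by_cases hx : x < b <;> simp [trimF, hx]

theorem derW_of_rle_multi {b x y : ℕ} {mm w : List ℕ} (h : rle w = x :: (mm ++ [y])) :
    derW b w = (if x < b then [] else [x]) ++ mm ++ (if y < b then [] else [y]) := by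
  rw [derW, h]
  by_cases hx : x < b <;> by_cases hy : y < b <;>
    simp [trimF, hx, hy, List.reverse_append]

theorem mem_derW {b t : ℕ} {w : List ℕ} (h : t ∈ derW b w) :
    t ∈ ((rle w).drop 1).dropLast ∨ (t ∈ rle w ∧ b ≤ t) := by
  rcases list_shape (rle w) with e | ⟨x, e⟩ | ⟨x, mm, y, e⟩
  · rw [derW_of_rle_nil e] at h; simp at h
  · rw [derW_of_rle_single e] at h
    by_cases hx : x < b <;> simp [hx] at h
    exact Or.inr ⟨by simp [e, h], h ▸ Nat.le_of_not_lt hx⟩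
  · rw [derW_of_rle_multi e] at h
    simp only [List.mem_append] at h
    have hint : ((rle w).drop 1).dropLast = mm := by simp [e]
    rcases h with (h | h) | h
    · by_cases hx : x < b <;> simp [hx] at h
      exact Or.inr ⟨by simp [e, h], h ▸ Nat.le_of_not_lt hx⟩
    · exact Or.inl (hint ▸ h)
    · by_cases hy : y < b <;> simp [hy] at h
      exact Or.inr ⟨by simp [e, h], h ▸ Nat.le_of_not_lt hy⟩

theorem getLast?_eq_getLastD {w : List ℕ} (h : w ≠ []) : w.getLast? = some (w.getLastD 0) := by
  rw [List.getLastD_eq_getLast?]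
  cases e : w.getLast? with
  | none => exact absurd (List.getLast?_eq_none_iff.mp e) h
  | some c => rfl

theorem head?_eq_headD {w : List ℕ} (h : w ≠ []) : w.head? = some (w.headD 0) := by
  cases w with
  | nil => exact absurd rfl h
  | cons x l => rfl

theorem rle_append_replicate (w : List ℕ) (c q : ℕ) (hw : w ≠ [])
    (h : w.getLastD 0 = c) :
    rle (w ++ List.replicate q c) = (rle w).dropLast ++ [(rle w).getLastD 0 + q] := by
  have h1 : (w ++ List.replicate q c).reverse = List.replicate q c ++ w.reverse := by simp
  have h2 : w.reverse.head? = some c := by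
    rw [List.head?_reverse, getLast?_eq_getLastD hw, h]
  have := rle_replicate_append q c w.reverse h2
  rw [← h1, rle_reverse, rle_reverse] at this
  have h3 := congrArg List.reverse this
  rw [List.reverse_reverse] at h3
  rw [h3, List.reverse_cons, List.tail_reverse, List.reverse_reverse]
  congr 1
  rw [List.headD_eq_head?_getD, List.head?_reverse, getLast?_eq_getLastD (rle_ne_nil hw),
    List.getLastD_eq_getLast?, getLast?_eq_getLastD (rle_ne_nil hw)]
  simp [Nat.add_comm]

theorem rle_append_singleton_ne (w : List ℕ) (β : ℕ) (hw : w ≠ [])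
    (h : w.getLastD 0 ≠ β) : rle (w ++ [β]) = rle w ++ [1] := by
  rw [rle_append_ne w [β] hw (by rw [getLast?_eq_getLastD hw]; simpa using h)]
  rfl

theorem clos_eq (a b : ℕ) (w : List ℕ) :
    clos a b w =
      List.replicate (if a < (rle w).headD 0 then b - (rle w).headD 0 else 0) (w.headD 0)
        ++ w ++
      List.replicate (if a < (rle w).getLastD 0 then b - (rle w).getLastD 0 else 0)
        (w.getLastD 0) := by
  rw [clos]
  split_ifs <;> simp

theorem clos_nil (a b : ℕ) : clos a b [] = [] := rfl

theorem rhoW_nil (a b : ℕ) : rhoW a b [] = [] := rfl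

theorem iterate_rhoW_nil (a b k : ℕ) : (rhoW a b)^[k] [] = [] :=
  Function.iterate_fixed (rhoW_nil a b) k

theorem concat_getLastD (x y : ℕ) (l : List ℕ) : (x :: (l ++ [y])).getLastD 0 = y := by
  rw [show x :: (l ++ [y]) = (x :: l) ++ [y] from rfl, List.getLastD_eq_getLast?,
    List.getLast?_concat]
  rfl

theorem concat_dropLast (x y : ℕ) (l : List ℕ) : (x :: (l ++ [y])).dropLast = x :: l := by
  rw [show x :: (l ++ [y]) = (x :: l) ++ [y] from rfl, List.dropLast_concat]

theorem DiffW_nil (a b : ℕ) : DiffW a b [] := by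
  constructor <;> · intro t ht; rw [show rle [] = [] from rfl] at ht; simp at ht

theorem DiffW_intro {a b x y : ℕ} {mm v : List ℕ} (hab : a ≤ b)
    (shape : rle v = x :: (mm ++ [y])) (hx : x ≤ b) (hy : y ≤ b)
    (hmm : ∀ s ∈ mm, s = a ∨ s = b) : DiffW a b v := by
  constructor
  · intro s hs
    rw [shape] at hs
    rcases List.mem_cons.mp hs with rfl | hs
    · exact hx
    rcases List.mem_append.mp hs with hs | hs
    · rcases hmm s hs with rfl | rfl
      · exact hab
      · exact le_rfl
    · rw [List.mem_singleton.mp hs]; exact hy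
  · intro s hs
    rw [shape] at hs
    simp only [List.drop_succ_cons, List.drop_zero, List.dropLast_concat] at hs
    exact hmm s hs

theorem DiffW_intro_single {a b x : ℕ} {v : List ℕ}
    (shape : rle v = [x]) (hx : x ≤ b) : DiffW a b v := by
  constructor
  · intro s hs; rw [shape] at hs; rw [List.mem_singleton.mp hs]; exact hx
  · intro s hs; rw [shape] at hs; simp at hs

theorem rle_clos_multi {a b h t : ℕ} {mm w : List ℕ}
    (shape : rle w = h :: (mm ++ [t])) :
    rle (clos a b w) =
      (h + (if a < h then b - h else 0)) :: (mm ++ [t + (if a < t then b - t else 0)]) := by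
  have hwne : w ≠ [] := by
    intro e; rw [e, show rle [] = [] from rfl] at shape; exact List.cons_ne_nil _ _ shape.symm
  have hh : (rle w).headD 0 = h := by rw [shape]; rfl
  have hl : (rle w).getLastD 0 = t := by rw [shape]; exact concat_getLastD h t mm
  rw [clos_eq, hh, hl, List.append_assoc]
  set pt := if a < t then b - t else 0 with hpt
  set ph := if a < h then b - h else 0 with hph
  have h1 : rle (w ++ List.replicate pt (w.getLastD 0)) = h :: (mm ++ [t + pt]) := by
    rw [rle_append_replicate w _ pt hwne rfl, shape, concat_getLastD, concat_dropLast]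
    simp
  have h2 : (w ++ List.replicate pt (w.getLastD 0)).head? = some (w.headD 0) := by
    rw [List.head?_append_of_ne_nil _ hwne, head?_eq_headD hwne]
  rw [rle_replicate_append ph (w.headD 0) _ h2, h1]
  simp [Nat.add_comm]

theorem clos_replicate {a b t c : ℕ} (ht : 0 < t) :
    clos a b (List.replicate t c) =
      List.replicate (t + 2 * (if a < t then b - t else 0)) c := by
  have hr : rle (List.replicate t c) = [t] := rle_replicate t c ht
  have hhd : (List.replicate t c).headD 0 = c := by
    cases t with | zero => simp at ht | succ n => simp [List.replicate_succ]
  have hlst : (List.replicate t c).getLastD 0 = c := by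
    rw [List.getLastD_eq_getLast?, List.getLast?_replicate]
    simp [Nat.pos_iff_ne_zero.mp ht]
  rw [clos_eq, hr, hhd, hlst,
    show ([t] : List ℕ).headD 0 = t from rfl, show ([t] : List ℕ).getLastD 0 = t from rfl]
  rw [← List.replicate_add, ← List.replicate_add]
  congr 1
  omega

theorem rle_clos_single {a b t c : ℕ} (ht : 0 < t) :
    rle (clos a b (List.replicate t c)) = [t + 2 * (if a < t then b - t else 0)] := by
  rw [clos_replicate ht, rle_replicate]
  omega

theorem rho_formula {a b h t : ℕ} {mm w : List ℕ} (hab : a < b)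
    (shape : rle w = h :: (mm ++ [t])) (hh : h ≤ b) (ht : t ≤ b) :
    rhoW a b w = (if a < h then [b] else []) ++ mm ++ (if a < t then [b] else []) := by
  have e := rle_clos_multi (a := a) (b := b) shape
  rw [rhoW, derW_of_rle_multi e]
  congr 1
  · congr 1
    by_cases hah : a < h
    · have : h + (if a < h then b - h else 0) = b := by simp [hah]; omega
      rw [this]; simp [hah]
    · have : h + (if a < h then b - h else 0) = h := by simp [hah]
      rw [this]; simp only [if_pos (lt_of_le_of_lt (Nat.le_of_not_lt hah) hab), if_neg hah]
  · by_cases hat : a < t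
    · have : t + (if a < t then b - t else 0) = b := by simp [hat]; omega
      rw [this]; simp [hat]
    · have : t + (if a < t then b - t else 0) = t := by simp [hat]
      rw [this]; simp only [if_pos (lt_of_le_of_lt (Nat.le_of_not_lt hat) hab), if_neg hat]

theorem bounds_of_diff {a b h t : ℕ} {mm w : List ℕ}
    (shape : rle w = h :: (mm ++ [t])) (hd : DiffW a b (clos a b w)) :
    h ≤ b ∧ t ≤ b ∧ ∀ s ∈ mm, s = a ∨ s = b := by
  have e := rle_clos_multi (a := a) (b := b) shape
  obtain ⟨hd1, hd2⟩ := hd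
  rw [e] at hd1 hd2
  refine ⟨?_, ?_, ?_⟩
  · have := hd1 _ (by simp : h + (if a < h then b - h else 0) ∈ _)
    by_cases hah : a < h <;> simp [hah] at this <;> omega
  · have := hd1 (t + (if a < t then b - t else 0)) (by simp)
    by_cases hat : a < t <;> simp [hat] at this <;> omega
  · intro s hs
    exact hd2 s (by simp [hs])

theorem SmoothW_of {a b : ℕ} {v r : List ℕ} (h1 : WordOver a b v)
    (h2 : DiffW a b (clos a b v)) (hr : rhoW a b v = r)
    (h3 : ∀ k, DiffW a b (clos a b ((rhoW a b)^[k] r)))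
    (h4 : ∃ k, (rhoW a b)^[k] r = []) : SmoothW a b v := by
  refine ⟨h1, fun k => ?_, ?_⟩
  · cases k with
    | zero => exact h2
    | succ k => rw [Function.iterate_succ_apply, hr]; exact h3 k
  · obtain ⟨k, hk⟩ := h4
    exact ⟨k + 1, by rw [Function.iterate_succ_apply, hr]; exact hk⟩

theorem wordOver_rho {a b : ℕ} {w : List ℕ} (hd : DiffW a b (clos a b w)) :
    WordOver a b (rhoW a b w) := by
  intro t ht
  rcases mem_derW ht with h | ⟨h, hb⟩
  · exact hd.2 t h
  · have := hd.1 t h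
    right; omega

theorem exists_rho_iter {a b k : ℕ} {w : List ℕ} (hne : w ≠ [])
    (hk : (rhoW a b)^[k] w = []) : (rhoW a b)^[k - 1] (rhoW a b w) = [] := by
  cases k with
  | zero => exact absurd hk hne
  | succ k => rw [← Function.iterate_succ_apply]; simpa using hk

theorem smooth_rho {a b : ℕ} {w : List ℕ} (hw : SmoothW a b w) :
    SmoothW a b (rhoW a b w) := by
  obtain ⟨h1, h2, k, hk⟩ := hw
  refine ⟨wordOver_rho (h2 0), fun j => ?_, ?_⟩
  · rw [← Function.iterate_succ_apply]; exact h2 (j + 1)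
  · by_cases hne : w = []
    · exact ⟨0, by subst hne; exact rhoW_nil a b⟩
    · exact ⟨k - 1, exists_rho_iter hne hk⟩

theorem exists_run_last (w : List ℕ) (hw : w ≠ []) :
    ∃ t c u, 0 < t ∧ w = u ++ List.replicate t c ∧ u.getLast? ≠ some c := by
  obtain ⟨n, c, v, hn, hdec, hne⟩ := exists_run w.reverse (by simpa using hw)
  refine ⟨n, c, v.reverse, hn, ?_, ?_⟩
  · have := congrArg List.reverse hdec
    simpa using this
  · rw [List.getLast?_reverse]; exact hne

theorem smooth_single_a {a b : ℕ} (ha : 0 < a) (hab : a < b) : SmoothW a b [a] := by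
  have hna : ¬ a < 1 := by omega
  have hrle : rle [a] = [1] := rle_replicate 1 a one_pos
  have hclos : clos a b [a] = [a] := by
    rw [clos_eq, hrle]
    simp [hna]
  have hrho : rhoW a b [a] = [] := by
    rw [rhoW, hclos, derW_of_rle_single hrle, if_pos (by omega : 1 < b)]
  refine SmoothW_of (fun c hc => by simpa using Or.inl (List.mem_singleton.mp hc))
    ?_ hrho (fun k => ?_) ⟨0, rfl⟩
  · rw [hclos]; exact DiffW_intro_single hrle (by omega)
  · rw [iterate_rhoW_nil, clos_nil]; exact DiffW_nil a b

/-- the letter different from c within {a,b} -/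
def flipL (a b c : ℕ) : ℕ := if c = a then b else a

theorem flipL_mem {a b c : ℕ} : flipL a b c = a ∨ flipL a b c = b := by
  rw [flipL]; split_ifs <;> simp

theorem flipL_ne {a b c : ℕ} (hab : a ≠ b) (hc : c = a ∨ c = b) : flipL a b c ≠ c := by
  rw [flipL]; rcases hc with rfl | rfl
  · simpa using hab.symm
  · split_ifs with h
    · intro e; exact absurd (h.symm.trans e) hab
    · exact Ne.symm h

theorem getLastD_mem {w : List ℕ} (h : w ≠ []) : w.getLastD 0 ∈ w := by
  have h2 : w.getLast h ∈ w := List.getLast_mem h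
  have h3 : w.getLastD 0 = w.getLast h := by
    rw [List.getLastD_eq_getLast?, List.getLast?_eq_getLast h]
    rfl
  rw [h3]; exact h2

theorem head?_replicate_pos {t c : ℕ} (ht : 0 < t) :
    (List.replicate t c).head? = some c := by
  cases t with
  | zero => omega
  | succ n => simp [List.replicate_succ]

theorem getLastD_w {u : List ℕ} {t c : ℕ} (ht : 0 < t) :
    (u ++ List.replicate t c).getLastD 0 = c := by
  rw [List.getLastD_eq_getLast?, List.getLast?_append, List.getLast?_replicate]
  simp [Nat.pos_iff_ne_zero.mp ht]

theorem diff0 {a b : ℕ} {w : List ℕ} (hw : SmoothW a b w) : DiffW a b (clos a b w) := by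
  have := hw.2.1 0
  rwa [Function.iterate_zero_apply] at this

theorem rightExt (a b : ℕ) (ha : 0 < a) (hab : a < b) :
    ∀ k w, SmoothW a b w → (rhoW a b)^[k] w = [] →
      ∃ β, (β = a ∨ β = b) ∧ SmoothW a b (w ++ [β]) := by
  intro k
  induction k using Nat.strong_induction_on with
  | _ k IH =>
    intro w hw hk
    by_cases hwnil : w = []
    · exact ⟨a, Or.inl rfl, by rw [hwnil, List.nil_append]; exact smooth_single_a ha hab⟩
    obtain ⟨t, c, u, ht, rfl, hu⟩ := exists_run_last w hwnil
    have hc : c = a ∨ c = b := by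
      refine hw.1 c (List.mem_append.mpr (Or.inr ?_))
      exact List.mem_replicate.mpr ⟨Nat.pos_iff_ne_zero.mp ht, rfl⟩
    have hlastw : (u ++ List.replicate t c).getLastD 0 = c := getLastD_w ht
    have hβflip := flipL_ne (Nat.ne_of_lt hab) hc
    have hWOβ : ∀ β, (β = a ∨ β = b) →
        WordOver a b ((u ++ List.replicate t c) ++ [β]) := by
      intro β hβ s hs
      rcases List.mem_append.mp hs with hs | hs
      · exact hw.1 s hs
      · rw [List.mem_singleton.mp hs]; exact hβ
    -- transfer helpers
    have hTrans : ∀ β, rhoW a b ((u ++ List.replicate t c) ++ [β]) =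
        rhoW a b (u ++ List.replicate t c) →
        DiffW a b (clos a b ((u ++ List.replicate t c) ++ [β])) →
        (β = a ∨ β = b) →
        ∃ β, (β = a ∨ β = b) ∧ SmoothW a b ((u ++ List.replicate t c) ++ [β]) := by
      intro β hr hdif hβ
      refine ⟨β, hβ, SmoothW_of (hWOβ β hβ) hdif hr (fun j => ?_) ?_⟩
      · have := hw.2.1 (j + 1)
        rwa [Function.iterate_succ_apply] at this
      · exact ⟨k - 1, exists_rho_iter hwnil hk⟩
    have hDirect : ∀ β, rhoW a b ((u ++ List.replicate t c) ++ [β]) = [] →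
        DiffW a b (clos a b ((u ++ List.replicate t c) ++ [β])) →
        (β = a ∨ β = b) →
        ∃ β, (β = a ∨ β = b) ∧ SmoothW a b ((u ++ List.replicate t c) ++ [β]) := by
      intro β hr hdif hβ
      refine ⟨β, hβ, SmoothW_of (hWOβ β hβ) hdif hr (fun j => ?_) ⟨0, rfl⟩⟩
      rw [iterate_rhoW_nil, clos_nil]
      exact DiffW_nil a b
    by_cases hunil : u = []
    · -- single run case
      subst hunil
      rw [List.nil_append] at hwnil hk hw hlastw hWOβ hTrans hDirect ⊢
      have hrlew : rle (List.replicate t c) = [t] := rle_replicate t c ht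
      have hbound := (diff0 hw).1 _ (by rw [rle_clos_single ht]; exact List.mem_singleton_self _)
      by_cases hta : t + 1 ≤ a
      · -- t < a : extend with c
        have heq : List.replicate t c ++ [c] = List.replicate (t + 1) c :=
          (List.replicate_succ' (n := t) (a := c)).symm ▸ rfl
        have hrle' : rle (List.replicate t c ++ [c]) = [t + 1] := by
          rw [heq]; exact rle_replicate (t + 1) c (by omega)
        have hclos' : rle (clos a b (List.replicate t c ++ [c])) = [t + 1] := by
          rw [heq, rle_clos_single (by omega : 0 < t + 1), if_neg (by omega : ¬ a < t + 1)]
        refine hDirect c ?_ (DiffW_intro_single hclos' (by omega)) hc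
        rw [rhoW, derW_of_rle_single hclos', if_pos (by omega : t + 1 < b)]
      · by_cases htb : t ≤ a
        · -- t = a : extend with flip
          have hshap : rle (List.replicate t c ++ [flipL a b c]) = t :: ([] ++ [1]) := by
            rw [rle_append_singleton_ne _ _ hwnil (by rw [hlastw]; exact Ne.symm hβflip), hrlew]
            rfl
          have hclos' : rle (clos a b (List.replicate t c ++ [flipL a b c]))
              = t :: ([] ++ [1]) := by
            rw [rle_clos_multi hshap, if_neg (by omega : ¬ a < t), if_neg (by omega : ¬ a < 1)]
            rfl
          refine hDirect _ ?_ (DiffW_intro (le_of_lt hab) hclos' (by omega) (by omega)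
            (by simp)) flipL_mem
          rw [rho_formula hab hshap (by omega) (by omega), if_neg (by omega : ¬ a < t),
            if_neg (by omega : ¬ a < 1)]
          rfl
        · -- a < t : t = b, extend with flip
          have htb' : t = b := by
            rw [if_pos (by omega : a < t)] at hbound
            omega
          have hshap : rle (List.replicate t c ++ [flipL a b c]) = t :: ([] ++ [1]) := by
            rw [rle_append_singleton_ne _ _ hwnil (by rw [hlastw]; exact Ne.symm hβflip), hrlew]
            rfl
          have hclos' : rle (clos a b (List.replicate t c ++ [flipL a b c]))
              = t :: ([] ++ [1]) := by
            rw [rle_clos_multi hshap, if_pos (by omega : a < t), if_neg (by omega : ¬ a < 1)]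
            simp [htb']
          have hrhoβ : rhoW a b (List.replicate t c ++ [flipL a b c]) = [b] := by
            rw [rho_formula hab hshap (by omega) (by omega), if_pos (by omega : a < t),
              if_neg (by omega : ¬ a < 1)]
            rfl
          have hrhow : rhoW a b (List.replicate t c) = [b] := by
            have h1 : rle (clos a b (List.replicate t c)) = [b] := by
              rw [rle_clos_single ht, if_pos (by omega : a < t)]
              simp [htb']
            rw [rhoW, derW_of_rle_single h1, if_neg (lt_irrefl b)]
          exact hTrans _ (hrhoβ.trans hrhow.symm)
            (DiffW_intro (le_of_lt hab) hclos' (by omega) (by omega) (by simp)) flipL_mem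
    · -- multi-run case : u ≠ []
      obtain ⟨h, mm, hrleu⟩ : ∃ h mm, rle u = h :: mm := by
        cases e : rle u with
        | nil => exact absurd e (rle_ne_nil hunil)
        | cons h mm => exact ⟨h, mm, rfl⟩
      have shape : rle (u ++ List.replicate t c) = h :: (mm ++ [t]) := by
        rw [rle_append_ne u _ hunil (by rw [head?_replicate_pos ht]; exact hu),
          rle_replicate t c ht, hrleu]
        rfl
      obtain ⟨hhb, htb2, hmmab⟩ := bounds_of_diff shape (diff0 hw)
      have hrhow := rho_formula hab shape hhb htb2
      have hx : h + (if a < h then b - h else 0) ≤ b := by split_ifs <;> omega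
      have heqc : (u ++ List.replicate t c) ++ [c] = u ++ List.replicate (t + 1) c := by
        rw [List.append_assoc, ← List.replicate_succ']
      have shapec : rle ((u ++ List.replicate t c) ++ [c]) = h :: (mm ++ [t + 1]) := by
        rw [heqc, rle_append_ne u _ hunil
          (by rw [head?_replicate_pos (by omega : 0 < t + 1)]; exact hu),
          rle_replicate (t + 1) c (by omega), hrleu]
        rfl
      have shapef : rle ((u ++ List.replicate t c) ++ [flipL a b c])
          = h :: ((mm ++ [t]) ++ [1]) := by
        rw [rle_append_singleton_ne _ _ hwnil (by rw [hlastw]; exact Ne.symm hβflip), shape]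
        rfl
      by_cases h1 : t + 1 ≤ a
      · -- t < a : extend with c, rho unchanged
        refine hTrans c ?_ ?_ hc
        · rw [rho_formula hab shapec hhb (by omega), hrhow,
            if_neg (by omega : ¬ a < t + 1), if_neg (by omega : ¬ a < t)]
        · have hclosc : rle (clos a b ((u ++ List.replicate t c) ++ [c]))
              = (h + (if a < h then b - h else 0)) :: (mm ++ [t + 1]) := by
            rw [rle_clos_multi shapec, if_neg (by omega : ¬ a < t + 1)]
          exact DiffW_intro (le_of_lt hab) hclosc hx (by omega) hmmab
      · by_cases h2 : t ≤ a
        · -- t = a : use the induction hypothesis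
          have hta : t = a := by omega
          have hk0 : k ≠ 0 := by
            rintro rfl
            rw [Function.iterate_zero_apply] at hk
            exact hwnil hk
          obtain ⟨γ, hγab, hsγ⟩ := IH (k - 1) (by omega)
            (rhoW a b (u ++ List.replicate t c)) (smooth_rho hw) (exists_rho_iter hwnil hk)
          rcases hγab with hγ | hγ <;> rw [hγ] at hsγ
          · -- γ = a : extend with the flipped letter
            refine ⟨flipL a b c, flipL_mem, SmoothW_of (hWOβ _ flipL_mem) ?_ ?_
              hsγ.2.1 hsγ.2.2⟩
            · have hclosf : rle (clos a b ((u ++ List.replicate t c) ++ [flipL a b c]))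
                  = (h + (if a < h then b - h else 0)) :: ((mm ++ [t]) ++ [1]) := by
                rw [rle_clos_multi shapef, if_neg (by omega : ¬ a < 1)]
              refine DiffW_intro (le_of_lt hab) hclosf hx (by omega) ?_
              intro s hs
              rcases List.mem_append.mp hs with hs | hs
              · exact hmmab s hs
              · rw [List.mem_singleton.mp hs]; left; omega
            · rw [rho_formula hab shapef hhb (by omega), hrhow,
                if_neg (by omega : ¬ a < 1), if_neg (by omega : ¬ a < t), hta]
              simp
          · -- γ = b : extend with c
            refine ⟨c, hc, SmoothW_of (hWOβ _ hc) ?_ ?_ hsγ.2.1 hsγ.2.2⟩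
            · have hclosc : rle (clos a b ((u ++ List.replicate t c) ++ [c]))
                  = (h + (if a < h then b - h else 0)) :: (mm ++ [b]) := by
                rw [rle_clos_multi shapec, if_pos (by omega : a < t + 1),
                  show t + 1 + (b - (t + 1)) = b by omega]
              exact DiffW_intro (le_of_lt hab) hclosc hx le_rfl hmmab
            · rw [rho_formula hab shapec hhb (by omega), hrhow,
                if_pos (by omega : a < t + 1), if_neg (by omega : ¬ a < t)]
              simp
        · by_cases h3 : t < b
          · -- a < t < b : extend with c, rho unchanged
            refine hTrans c ?_ ?_ hc
            · rw [rho_formula hab shapec hhb (by omega), hrhow,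
                if_pos (by omega : a < t + 1), if_pos (by omega : a < t)]
            · have hclosc : rle (clos a b ((u ++ List.replicate t c) ++ [c]))
                  = (h + (if a < h then b - h else 0)) :: (mm ++ [b]) := by
                rw [rle_clos_multi shapec, if_pos (by omega : a < t + 1),
                  show t + 1 + (b - (t + 1)) = b by omega]
              exact DiffW_intro (le_of_lt hab) hclosc hx le_rfl hmmab
          · -- t = b : extend with the flipped letter, rho unchanged
            have htb' : t = b := by omega
            refine hTrans (flipL a b c) ?_ ?_ flipL_mem
            · rw [rho_formula hab shapef hhb (by omega), hrhow,
                if_neg (by omega : ¬ a < 1), if_pos (by omega : a < t)]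
              simp [List.append_assoc]
              omega
            · have hclosf : rle (clos a b ((u ++ List.replicate t c) ++ [flipL a b c]))
                  = (h + (if a < h then b - h else 0)) :: ((mm ++ [t]) ++ [1]) := by
                rw [rle_clos_multi shapef, if_neg (by omega : ¬ a < 1)]
              refine DiffW_intro (le_of_lt hab) hclosf hx (by omega) ?_
              intro s hs
              rcases List.mem_append.mp hs with hs | hs
              · exact hmmab s hs
              · rw [List.mem_singleton.mp hs]; right; omega

theorem headD_reverse (l : List ℕ) : l.reverse.headD 0 = l.getLastD 0 := by
  rw [List.headD_eq_head?_getD, List.head?_reverse, List.getLastD_eq_getLast?]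

theorem getLastD_reverse (l : List ℕ) : l.reverse.getLastD 0 = l.headD 0 := by
  rw [List.getLastD_eq_getLast?, List.getLast?_reverse, List.headD_eq_head?_getD]

theorem derW_reverse (b : ℕ) (w : List ℕ) : derW b w.reverse = (derW b w).reverse := by
  rcases list_shape (rle w) with e | ⟨x, e⟩ | ⟨x, mm, y, e⟩
  · have e' : rle w.reverse = [] := by rw [rle_reverse, e]; rfl
    rw [derW_of_rle_nil e, derW_of_rle_nil e']
    rfl
  · have e' : rle w.reverse = [x] := by rw [rle_reverse, e]; rfl
    rw [derW_of_rle_single e, derW_of_rle_single e']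
    split_ifs <;> rfl
  · have e' : rle w.reverse = y :: (mm.reverse ++ [x]) := by
      rw [rle_reverse, e]; simp
    rw [derW_of_rle_multi e, derW_of_rle_multi e']
    by_cases hx : x < b <;> by_cases hy : y < b <;> simp [hx, hy]

theorem clos_reverse (a b : ℕ) (w : List ℕ) :
    clos a b w.reverse = (clos a b w).reverse := by
  rw [clos_eq, clos_eq, rle_reverse, headD_reverse, getLastD_reverse,
    headD_reverse, getLastD_reverse]
  simp [List.reverse_append]

theorem rhoW_reverse (a b : ℕ) (w : List ℕ) :
    rhoW a b w.reverse = (rhoW a b w).reverse := by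
  rw [rhoW, rhoW, clos_reverse, derW_reverse]

theorem iterate_rhoW_reverse (a b k : ℕ) (w : List ℕ) :
    (rhoW a b)^[k] w.reverse = ((rhoW a b)^[k] w).reverse := by
  induction k generalizing w with
  | zero => rfl
  | succ k ih =>
    rw [Function.iterate_succ_apply, Function.iterate_succ_apply, rhoW_reverse, ih]

theorem tail_dropLast (l : List ℕ) : l.dropLast.tail = l.tail.dropLast := by
  cases l with
  | nil => rfl
  | cons x xs =>
    cases xs with
    | nil => rfl
    | cons y ys => simp

theorem DiffW_reverse {a b : ℕ} {v : List ℕ} (h : DiffW a b v) : DiffW a b v.reverse := by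
  obtain ⟨h1, h2⟩ := h
  constructor
  · intro t ht
    rw [rle_reverse, List.mem_reverse] at ht
    exact h1 t ht
  · intro t ht
    rw [rle_reverse] at ht
    have e : ((rle v).reverse.drop 1).dropLast = ((rle v).drop 1).dropLast.reverse := by
      rw [List.drop_one, List.tail_reverse, List.dropLast_reverse, tail_dropLast,
        ← List.drop_one]
    rw [e, List.mem_reverse] at ht
    exact h2 t ht

theorem SmoothW_reverse {a b : ℕ} {w : List ℕ} (h : SmoothW a b w) :
    SmoothW a b w.reverse := by
  obtain ⟨h1, h2, k, hk⟩ := h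
  refine ⟨fun c hc => h1 c (List.mem_reverse.mp hc), fun j => ?_, ⟨k, ?_⟩⟩
  · rw [iterate_rhoW_reverse, clos_reverse]
    exact DiffW_reverse (h2 j)
  · rw [iterate_rhoW_reverse, hk]
    rfl


theorem stmt10 (a b : ℕ) (ha : 0 < a) (hab : a < b) (w : List ℕ)
    (hw : SmoothW a b w) :
    (∃ α, (α = a ∨ α = b) ∧ SmoothW a b (α :: w)) ∧
    (∃ β, (β = a ∨ β = b) ∧ SmoothW a b (w ++ [β])) := by
  obtain ⟨k, hk⟩ := hw.2.2
  constructor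
  · have hrev : SmoothW a b w.reverse := SmoothW_reverse hw
    have hkrev : (rhoW a b)^[k] w.reverse = [] := by
      rw [iterate_rhoW_reverse, hk]; rfl
    obtain ⟨β, hβ, hsm⟩ := rightExt a b ha hab k w.reverse hrev hkrev
    refine ⟨β, hβ, ?_⟩
    have := SmoothW_reverse hsm
    rwa [List.reverse_append, List.reverse_reverse, show [β].reverse = [β] from rfl,
      List.singleton_append] at this
  · exact rightExt a b ha hab k w hw hk
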